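/- Let M be a free monoid on {a,b,c,d} and consider the quotient group G = ⟨a,b,c,d | a² = b² = c² = d² = 1, bc = cb = d, cd = dc = b, bd = db = c⟩. Then every element of G is represented by a word of the form [a] x₁ a x₂ a … a x_k [a] where each xᵢ ∈ {b,c,d} and [a] denotes an optional letter a; moreover such a representative can be chosen with length at most that of any given representing word. -/

import Mathlib

inductive GLetter : Type
  | a | b | c | d
deriving DecidableEq

open FreeGroup in
/-- The relations a² = b² = c² = d² = 1, bc = cb = d, cd = dc = b,
bd = db = c of the quotient group G. -/
def grigRels : Set (FreeGroup GLetter) :=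
  { of GLetter.a * of GLetter.a,
    of GLetter.b * of GLetter.b,
    of GLetter.c * of GLetter.c,
    of GLetter.d * of GLetter.d,
    of GLetter.b * of GLetter.c * (of GLetter.d)⁻¹,
    of GLetter.c * of GLetter.b * (of GLetter.d)⁻¹,
    of GLetter.c * of GLetter.d * (of GLetter.b)⁻¹,
    of GLetter.d * of GLetter.c * (of GLetter.b)⁻¹,
    of GLetter.b * of GLetter.d * (of GLetter.c)⁻¹,
    of GLetter.d * of GLetter.b * (of GLetter.c)⁻¹ }

/-- Evaluation of a word over {a,b,c,d} in the presented group. -/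
def evalWord (w : List GLetter) : PresentedGroup grigRels :=
  (w.map PresentedGroup.of).prod

/-- A word is reduced if letters alternate between `a` and letters in
`{b,c,d}`, i.e. it has the form [a] x₁ a x₂ a … a x_k [a]. -/
def GIsReduced (w : List GLetter) : Prop :=
  w.Chain' fun x y => (x = GLetter.a ↔ y ≠ GLetter.a)

namespace GrigHelper

lemma rel_eq_one {r : FreeGroup GLetter} (h : r ∈ grigRels) :
    PresentedGroup.mk grigRels r = 1 := by
  have : r ∈ Subgroup.normalClosure grigRels := Subgroup.subset_normalClosure h
  exact (QuotientGroup.eq_one_iff r).2 this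

lemma sq (x : GLetter) :
    (PresentedGroup.of x : PresentedGroup grigRels) * PresentedGroup.of x = 1 := by
  have : PresentedGroup.mk grigRels (FreeGroup.of x * FreeGroup.of x) = 1 := by
    apply rel_eq_one; cases x <;> simp [grigRels]
  simpa [PresentedGroup.of] using this

lemma inv_of (x : GLetter) :
    (PresentedGroup.of x : PresentedGroup grigRels)⁻¹ = PresentedGroup.of x :=
  inv_eq_of_mul_eq_one_right (sq x)

/-- Product of two distinct non-a letters. -/
def prod3 : GLetter → GLetter → GLetter
  | GLetter.b, GLetter.c => GLetter.d
  | GLetter.c, GLetter.b => GLetter.d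
  | GLetter.c, GLetter.d => GLetter.b
  | GLetter.d, GLetter.c => GLetter.b
  | GLetter.b, GLetter.d => GLetter.c
  | GLetter.d, GLetter.b => GLetter.c
  | _, _ => GLetter.a

lemma of_mul_of (x y : GLetter) (hx : x ≠ GLetter.a) (hy : y ≠ GLetter.a) (hxy : x ≠ y) :
    (PresentedGroup.of x : PresentedGroup grigRels) * PresentedGroup.of y
      = PresentedGroup.of (prod3 x y) := by
  have key : ∀ u v w : GLetter,
      (FreeGroup.of u * FreeGroup.of v * (FreeGroup.of w)⁻¹) ∈ grigRels →
      (PresentedGroup.of u : PresentedGroup grigRels) * PresentedGroup.of v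
        = PresentedGroup.of w := by
    intro u v w h
    have h1 := rel_eq_one h
    have : PresentedGroup.mk grigRels (FreeGroup.of u) *
        PresentedGroup.mk grigRels (FreeGroup.of v) *
        (PresentedGroup.mk grigRels (FreeGroup.of w))⁻¹ = 1 := by
      simpa using h1
    have := mul_inv_eq_one.mp this
    simpa [PresentedGroup.of] using this
  cases x <;> cases y <;> first
    | exact absurd rfl hx
    | exact absurd rfl hy
    | exact absurd rfl hxy
    | exact key _ _ _ (by simp [grigRels, prod3])

lemma prod3_ne_a (x y : GLetter) (hx : x ≠ GLetter.a) (hy : y ≠ GLetter.a) (hxy : x ≠ y) :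
    prod3 x y ≠ GLetter.a := by
  cases x <;> cases y <;> simp_all [prod3]

@[simp] lemma evalWord_nil : evalWord [] = 1 := rfl

@[simp] lemma evalWord_cons (x : GLetter) (w : List GLetter) :
    evalWord (x :: w) = PresentedGroup.of x * evalWord w := by
  simp [evalWord]

lemma evalWord_append (u v : List GLetter) :
    evalWord (u ++ v) = evalWord u * evalWord v := by
  simp [evalWord]

lemma evalWord_reverse (w : List GLetter) :
    evalWord w.reverse = (evalWord w)⁻¹ := by
  induction w with
  | nil => simp
  | cons x t ih =>
      simp [List.reverse_cons, evalWord_append, ih, mul_inv_rev, inv_of]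

lemma cons_reduced (x : GLetter) (w : List GLetter) (hw : GIsReduced w) :
    ∃ w', GIsReduced w' ∧ evalWord w' = PresentedGroup.of x * evalWord w ∧
      w'.length ≤ w.length + 1 := by
  match w with
  | [] => exact ⟨[x], List.isChain_singleton _, by simp, by simp⟩
  | y :: t =>
      by_cases hok : (x = GLetter.a ↔ y ≠ GLetter.a)
      · refine ⟨x :: y :: t, ?_, by simp, by simp⟩
        exact List.isChain_cons_cons.mpr ⟨hok, hw⟩
      · have ht : GIsReduced t := (List.isChain_cons.mp hw).2
        by_cases hxa : x = GLetter.a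
        · -- then y = a as well
          have hya : y = GLetter.a := by
            by_contra hya
            exact hok (by simp [hxa, hya])
          refine ⟨t, ht, ?_, by simp; omega⟩
          subst hxa; subst hya
          simp [← mul_assoc, sq]
        · have hya : y ≠ GLetter.a := by
            intro hya
            exact hok (by simp [hxa, hya])
          by_cases hxy : x = y
          · refine ⟨t, ht, ?_, by simp; omega⟩
            subst hxy
            simp [← mul_assoc, sq]
          · refine ⟨prod3 x y :: t, ?_, ?_, by simp⟩
            · cases t with
              | nil => exact List.isChain_singleton _
              | cons h t' =>
                  have hc := List.isChain_cons_cons.mp hw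
                  have hha : h = GLetter.a := by
                    by_contra hha
                    exact hya (hc.1.mpr hha)
                  refine List.isChain_cons_cons.mpr ⟨?_, hc.2⟩
                  simp [prod3_ne_a x y hxa hya hxy, hha]
            · simp [← mul_assoc, of_mul_of x y hxa hya hxy]

lemma part2 (w : List GLetter) :
    ∃ w', GIsReduced w' ∧ evalWord w' = evalWord w ∧ w'.length ≤ w.length := by
  induction w with
  | nil => exact ⟨[], List.isChain_nil, rfl, le_refl _⟩
  | cons x t ih =>
      obtain ⟨u, hu, heq, hlen⟩ := ih
      obtain ⟨w', hw', heq', hlen'⟩ := cons_reduced x u hu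
      exact ⟨w', hw', by simp [heq', heq], by simp; omega⟩

end GrigHelper

theorem exists_reduced_representative :
    (∀ g : PresentedGroup grigRels,
        ∃ w' : List GLetter, GIsReduced w' ∧ evalWord w' = g) ∧
    (∀ w : List GLetter,
        ∃ w' : List GLetter, GIsReduced w' ∧ evalWord w' = evalWord w ∧
          w'.length ≤ w.length) := by
  constructor
  · intro g
    suffices h : ∃ w : List GLetter, evalWord w = g by
      obtain ⟨w, rfl⟩ := h
      obtain ⟨w', h1, h2, _⟩ := GrigHelper.part2 w
      exact ⟨w', h1, h2⟩
    induction g with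
    | H z =>
        induction z with
        | C1 => exact ⟨[], by simp [map_one]⟩
        | of x => exact ⟨[x], by simp [GrigHelper.evalWord_cons]; rfl⟩
        | inv_of x ih =>
            obtain ⟨w, hw⟩ := ih
            exact ⟨w.reverse, by rw [GrigHelper.evalWord_reverse, hw, map_inv]⟩
        | mul u v ihu ihv =>
            obtain ⟨wu, hwu⟩ := ihu
            obtain ⟨wv, hwv⟩ := ihv
            exact ⟨wu ++ wv, by rw [GrigHelper.evalWord_append, hwu, hwv, map_mul]⟩
  · exact GrigHelper.part2
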